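/- Let s, s' ∈ (0,1). Then (1/log N)·Σ_{k=1}^{N−1} [(1 − (1−s)^{k+1})·(1 − (1−s')^{N−k})] / [(k+1)·s'·(1 − (1−s)^N)] converges to 1/s' as N → ∞. -/

import Mathlib

open Filter Finset

private lemma aux_term_bounds {x y D K t : ℝ} (hx0 : 0 ≤ x) (hx1 : x ≤ 1)
    (hy0 : 0 ≤ y) (hy1 : y ≤ 1) (hD0 : 0 < D) (hD1 : D ≤ 1) (hK : 1 ≤ K)
    (ht : 0 < t) :
    1 / (K * t) - (x + y) / t ≤ (1 - x) * (1 - y) / (K * t * D) ∧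
      (1 - x) * (1 - y) / (K * t * D) ≤ (1 / K) * (1 / (t * D)) := by
  have hK0 : 0 < K := lt_of_lt_of_le one_pos hK
  constructor
  · have h1 : (1 - x) * (1 - y) / (K * t) ≤ (1 - x) * (1 - y) / (K * t * D) := by
      apply div_le_div_of_nonneg_left (by nlinarith) (by positivity)
      nlinarith [mul_pos hK0 ht]
    have h2 : (1 - x - y) / (K * t) ≤ (1 - x) * (1 - y) / (K * t) := by
      gcongr ?_ / _
      nlinarith
    have hxy : (x + y) / (K * t) ≤ (x + y) / t := by
      apply div_le_div_of_nonneg_left (by nlinarith) ht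
      nlinarith
    have heq : (1 - x - y) / (K * t) = 1 / (K * t) - (x + y) / (K * t) := by ring
    linarith
  · rw [mul_one_div, div_div, ← mul_assoc]
    gcongr ?_ / _
    nlinarith

private lemma aux_geom_sum_le {r : ℝ} (h0 : 0 ≤ r) (h1 : r < 1) (N : ℕ) :
    ∑ k ∈ Icc 1 (N - 1), r ^ k ≤ 1 / (1 - r) := by
  have h2 : ∑ k ∈ Icc 1 (N - 1), r ^ k ≤ ∑ k ∈ range N, r ^ k := by
    apply Finset.sum_le_sum_of_subset_of_nonneg
    · intro k hk
      simp only [mem_Icc] at hk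
      simp only [mem_range]
      omega
    · intro i _ _
      positivity
  have h3 : ∑ k ∈ range N, r ^ k ≤ ∑' k : ℕ, r ^ k :=
    Summable.sum_le_tsum _ (fun i _ => by positivity) (summable_geometric_of_lt_one h0 h1)
  rw [tsum_geometric_of_lt_one h0 h1] at h3
  rw [one_div]
  linarith

private lemma aux_harmonic_log (N : ℕ) (hN : 1 ≤ N) :
    ∑ k ∈ Icc 1 (N - 1), (1 : ℝ) / ((k : ℝ) + 1) = (harmonic N : ℝ) - 1 := by
  obtain ⟨n, rfl⟩ : ∃ n, N = n + 1 := ⟨N - 1, by omega⟩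
  have hcast : (harmonic (n + 1) : ℝ) = ∑ i ∈ range (n + 1), (1 : ℝ) / ((i : ℝ) + 1) := by
    rw [harmonic]
    push_cast
    simp [one_div]
  rw [hcast, Finset.sum_range_succ', Nat.add_sub_cancel]
  rw [← Finset.Ico_add_one_right_eq_Icc, Finset.sum_Ico_eq_sum_range]
  push_cast
  ring_nf

private lemma aux_sum_reflect (b' : ℝ) (N : ℕ) (hN : 2 ≤ N) :
    ∑ k ∈ Icc 1 (N - 1), b' ^ (N - k) = ∑ k ∈ Icc 1 (N - 1), b' ^ k :=
  Finset.sum_nbij' (i := fun k => N - k) (j := fun k => N - k)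
    (fun a ha => by simp only [mem_Icc] at *; omega)
    (fun a ha => by simp only [mem_Icc] at *; omega)
    (fun a ha => by simp only [mem_Icc] at *; omega)
    (fun a ha => by simp only [mem_Icc] at *; omega)
    (fun a ha => rfl)

private lemma aux_H_div_log :
    Filter.Tendsto (fun N : ℕ => (∑ k ∈ Icc 1 (N - 1), (1 : ℝ) / ((k : ℝ) + 1)) / Real.log N)
      Filter.atTop (nhds 1) := by
  have hlog : Filter.Tendsto (fun N : ℕ => Real.log N) Filter.atTop Filter.atTop :=
    Real.tendsto_log_atTop.comp tendsto_natCast_atTop_atTop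
  have hinv : Filter.Tendsto (fun N : ℕ => (Real.log N)⁻¹) Filter.atTop (nhds 0) :=
    hlog.inv_tendsto_atTop
  have hev : ∀ᶠ N : ℕ in Filter.atTop, Real.log N ≠ 0 := by
    filter_upwards [Filter.eventually_ge_atTop 2] with N hN
    have : (0:ℝ) < Real.log N := by
      apply Real.log_pos
      exact_mod_cast by omega
    linarith
  have hharm : Filter.Tendsto (fun N : ℕ => ((harmonic N : ℝ) / Real.log N)) Filter.atTop
      (nhds 1) := by
    have h1 := Real.tendsto_harmonic_sub_log.mul hinv
    rw [mul_zero] at h1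
    have h2 := h1.add_const 1
    rw [zero_add] at h2
    apply h2.congr'
    filter_upwards [hev] with N hN
    field_simp
    ring
  have hres := hharm.sub (hinv.add_const 0)
  rw [add_zero, sub_zero] at hres
  apply hres.congr'
  filter_upwards [hev, Filter.eventually_ge_atTop 1] with N h0 h1
  rw [aux_harmonic_log N h1]
  field_simp
  ring

/-- Asymptotics of the expected number of recombination opportunities:
`(1/log N) Σ_{k=1}^{N−1} (1−(1−s)^{k+1})(1−(1−s')^{N−k}) /
  ((k+1) s' (1−(1−s)^N)) → 1/s'` as `N → ∞`. -/
theorem recombination_sum_asymptotics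
    (s s' : ℝ) (hs : s ∈ Set.Ioo (0:ℝ) 1) (hs' : s' ∈ Set.Ioo (0:ℝ) 1) :
    Tendsto (fun N : ℕ =>
        (1 / Real.log N) * ∑ k ∈ Finset.Icc 1 (N - 1),
          (1 - (1 - s) ^ (k + 1)) * (1 - (1 - s') ^ (N - k)) /
            (((k : ℝ) + 1) * s' * (1 - (1 - s) ^ N)))
      atTop (nhds (1 / s')) := by
  obtain ⟨hs0, hs1⟩ := hs
  obtain ⟨hs'0, hs'1⟩ := hs'
  have hb0 : (0:ℝ) ≤ 1 - s := by linarith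
  have hb1 : 1 - s < 1 := by linarith
  have hb'0 : (0:ℝ) ≤ 1 - s' := by linarith
  have hb'1 : 1 - s' < 1 := by linarith
  set H : ℕ → ℝ := fun N => ∑ k ∈ Icc 1 (N - 1), (1:ℝ)/((k:ℝ)+1) with hHdef
  have hHlog : Filter.Tendsto (fun N : ℕ => H N / Real.log N) Filter.atTop (nhds 1) :=
    aux_H_div_log
  have hinv : Filter.Tendsto (fun N : ℕ => 1 / Real.log N) Filter.atTop (nhds 0) := by
    simpa [one_div, Function.comp_def, Pi.inv_def] using
      (Real.tendsto_log_atTop.comp tendsto_natCast_atTop_atTop).inv_tendsto_atTop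
  set C : ℝ := 1/s + 1/s' with hCdef
  have hlowT : Filter.Tendsto
      (fun N : ℕ => H N / Real.log N * (1/s') - C/s' * (1/Real.log N))
      Filter.atTop (nhds (1/s')) := by
    have h := (hHlog.mul_const ((1:ℝ)/s')).sub (hinv.const_mul (C/s'))
    simpa using h
  have hpow : Filter.Tendsto (fun N : ℕ => (1-s)^N) Filter.atTop (nhds 0) :=
    tendsto_pow_atTop_nhds_zero_of_lt_one hb0 hb1
  have h2 : Filter.Tendsto (fun N : ℕ => 1/(s' * (1 - (1-s)^N))) Filter.atTop
      (nhds (1/s')) := by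
    have h := (tendsto_const_nhds.mul (tendsto_const_nhds.sub hpow)).inv₀
      (show s' * (1 - (0:ℝ)) ≠ 0 by simp; positivity)
    simp only [sub_zero, mul_one] at h
    simpa [one_div] using h
  have hupT : Filter.Tendsto
      (fun N : ℕ => H N / Real.log N * (1/(s' * (1 - (1-s)^N))))
      Filter.atTop (nhds (1/s')) := by
    simpa using hHlog.mul h2
  refine tendsto_of_tendsto_of_tendsto_of_le_of_le' hlowT hupT ?_ ?_
  · -- lower bound
    filter_upwards [Filter.eventually_ge_atTop 2] with N hN
    have hl : 0 < Real.log N := Real.log_pos (by exact_mod_cast by omega)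
    have hl0 : (0:ℝ) ≤ 1 / Real.log N := by positivity
    have hD0 : 0 < 1 - (1-s)^N := by
      have := pow_lt_one₀ hb0 hb1 (show N ≠ 0 by omega)
      linarith
    have hD1 : 1 - (1-s)^N ≤ 1 := by
      have := pow_nonneg hb0 N
      linarith
    have key1 : H N / s' - C / s' ≤
        ∑ k ∈ Icc 1 (N - 1), (1 - (1 - s) ^ (k + 1)) * (1 - (1 - s') ^ (N - k)) /
            (((k : ℝ) + 1) * s' * (1 - (1 - s) ^ N)) := by
      have hS_lb : ∑ k ∈ Icc 1 (N - 1),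
          (1/(((k:ℝ)+1) * s') - ((1-s)^(k+1) + (1-s')^(N-k))/s') ≤
          ∑ k ∈ Icc 1 (N - 1), (1 - (1 - s) ^ (k + 1)) * (1 - (1 - s') ^ (N - k)) /
            (((k : ℝ) + 1) * s' * (1 - (1 - s) ^ N)) := by
        apply Finset.sum_le_sum
        intro k hk
        have hK : (1:ℝ) ≤ (k:ℝ) + 1 := by
          have : (0:ℝ) ≤ (k:ℝ) := Nat.cast_nonneg k
          linarith
        exact (aux_term_bounds (pow_nonneg hb0 _) (pow_le_one₀ hb0 hb1.le)
          (pow_nonneg hb'0 _) (pow_le_one₀ hb'0 hb'1.le) hD0 hD1 hK hs'0).1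
      have hHs : H N / s' = ∑ k ∈ Icc 1 (N - 1), 1/(((k:ℝ)+1) * s') := by
        simp only [hHdef]
        rw [Finset.sum_div]
        exact Finset.sum_congr rfl fun k _ => div_div 1 _ s'
      have hsum_eq : ∑ k ∈ Icc 1 (N - 1),
          (1/(((k:ℝ)+1) * s') - ((1-s)^(k+1) + (1-s')^(N-k))/s') =
          H N / s' - (∑ k ∈ Icc 1 (N - 1), ((1-s)^(k+1) + (1-s')^(N-k)))/s' := by
        rw [Finset.sum_sub_distrib, ← Finset.sum_div, ← hHs]
      have hxy_sum : ∑ k ∈ Icc 1 (N - 1), ((1-s)^(k+1) + (1-s')^(N-k)) ≤ C := by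
        rw [Finset.sum_add_distrib, hCdef]
        have hx : ∑ k ∈ Icc 1 (N - 1), (1-s)^(k+1) ≤ 1/s := by
          have h1 : ∑ k ∈ Icc 1 (N - 1), (1-s)^(k+1) ≤ ∑ k ∈ Icc 1 (N - 1), (1-s)^k :=
            Finset.sum_le_sum fun k _ =>
              pow_le_pow_of_le_one hb0 hb1.le (Nat.le_succ k)
          have h2 := aux_geom_sum_le hb0 hb1 N
          have h3 : 1 - (1 - s) = s := by ring
          rw [h3] at h2
          linarith
        have hy : ∑ k ∈ Icc 1 (N - 1), (1-s')^(N-k) ≤ 1/s' := by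
          rw [aux_sum_reflect _ N hN]
          have h2 := aux_geom_sum_le hb'0 hb'1 N
          have h3 : 1 - (1 - s') = s' := by ring
          rw [h3] at h2
          linarith
        linarith
      have hdiv : (∑ k ∈ Icc 1 (N - 1), ((1-s)^(k+1) + (1-s')^(N-k)))/s' ≤ C/s' := by
        gcongr
      linarith [hsum_eq ▸ hS_lb]
    have e1 : H N / Real.log N * (1/s') - C/s' * (1/Real.log N) =
        1/Real.log N * (H N / s' - C / s') := by ring
    rw [e1]
    exact mul_le_mul_of_nonneg_left key1 hl0
  · -- upper bound
    filter_upwards [Filter.eventually_ge_atTop 2] with N hN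
    have hl : 0 < Real.log N := Real.log_pos (by exact_mod_cast by omega)
    have hl0 : (0:ℝ) ≤ 1 / Real.log N := by positivity
    have hD0 : 0 < 1 - (1-s)^N := by
      have := pow_lt_one₀ hb0 hb1 (show N ≠ 0 by omega)
      linarith
    have hD1 : 1 - (1-s)^N ≤ 1 := by
      have := pow_nonneg hb0 N
      linarith
    have key2 : ∑ k ∈ Icc 1 (N - 1), (1 - (1 - s) ^ (k + 1)) * (1 - (1 - s') ^ (N - k)) /
            (((k : ℝ) + 1) * s' * (1 - (1 - s) ^ N)) ≤
        H N * (1/(s' * (1 - (1-s)^N))) := by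
      have hS_ub : ∑ k ∈ Icc 1 (N - 1), (1 - (1 - s) ^ (k + 1)) * (1 - (1 - s') ^ (N - k)) /
            (((k : ℝ) + 1) * s' * (1 - (1 - s) ^ N)) ≤
          ∑ k ∈ Icc 1 (N - 1), (1/((k:ℝ)+1)) * (1/(s' * (1 - (1-s)^N))) := by
        apply Finset.sum_le_sum
        intro k hk
        have hK : (1:ℝ) ≤ (k:ℝ) + 1 := by
          have : (0:ℝ) ≤ (k:ℝ) := Nat.cast_nonneg k
          linarith
        exact (aux_term_bounds (pow_nonneg hb0 _) (pow_le_one₀ hb0 hb1.le)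
          (pow_nonneg hb'0 _) (pow_le_one₀ hb'0 hb'1.le) hD0 hD1 hK hs'0).2
      rw [← Finset.sum_mul] at hS_ub
      exact hS_ub
    have e1 : H N / Real.log N * (1/(s' * (1 - (1-s)^N))) =
        1/Real.log N * (H N * (1/(s' * (1 - (1-s)^N)))) := by ring
    rw [e1]
    exact mul_le_mul_of_nonneg_left key2 hl0
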